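/- arXiv:2104.10601 — 4 statements merged into one kernel-verified Lean document; each statement's English description precedes it below -/
import Mathlib

section
/- (Lemma 3(a)) Let Δ ⊆ ℝ^{d_δ} be compact and nonempty. The map φ: l^∞(Δ) → ℝ given by φ(x) = sup_{δ∈Δ} x(δ) is Hadamard directionally differentiable at any x ∈ C(Δ) tangentially to C(Δ), with derivative φ'_x(h) = sup_{δ∈Δ_0(x)} h(δ), where Δ_0(x) = {δ_0 ∈ Δ : x(δ_0) = sup_{δ∈Δ} x(δ)}. -/
open Filter Topology
open scoped ENNReal

noncomputable section

/-- The map `φ : X_D → Y` is Hadamard directionally differentiable at `x ∈ X_D`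
tangentially to `X₀ ⊆ X`, with derivative `φ'` (only the values of `φ'` on `X₀` matter):
for all sequences `hₙ → h ∈ X₀` and `tₙ ↓ 0` (positive reals) with `x + tₙ hₙ ∈ X_D`
for all `n`, `(φ(x + tₙ hₙ) − φ(x))/tₙ → φ'(h)`. -/
def HadamardDirDiffAt {X Y : Type*} [NormedAddCommGroup X] [NormedSpace ℝ X]
    [NormedAddCommGroup Y] [NormedSpace ℝ Y]
    (XD X₀ : Set X) (φ : X → Y) (x : X) (φ' : X → Y) : Prop :=
  ∀ h ∈ X₀, ∀ (hn : ℕ → X) (tn : ℕ → ℝ),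
    (∀ n, 0 < tn n) → Antitone tn → Filter.Tendsto tn Filter.atTop (nhds 0) →
    Filter.Tendsto hn Filter.atTop (nhds h) → (∀ n, x + tn n • hn n ∈ XD) →
    Filter.Tendsto (fun n => (tn n)⁻¹ • (φ (x + tn n • hn n) - φ x))
      Filter.atTop (nhds (φ' h))


set_option maxHeartbeats 1000000 in
/-- Lemma 3(a): for compact nonempty `Δ ⊆ ℝ^{dδ}`, the map
`φ : l^∞(Δ) → ℝ`, `φ(x) = sup_{δ∈Δ} x(δ)`, is Hadamard directionally differentiable at
any continuous `x` tangentially to `C(Δ)`, with derivative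
`φ'_x(h) = sup_{δ∈Δ₀(x)} h(δ)` where `Δ₀(x) = {δ₀ ∈ Δ : x(δ₀) = sup_{δ∈Δ} x(δ)}`.
Here `l^∞(Δ)` is modeled as `lp (fun _ : Δ => ℝ) ∞`, the bounded real functions on `Δ`
with the supremum norm, and `C(Δ)` as its subset of continuous functions. -/
theorem statement_6 {dδ : ℕ} (Δ : Set (EuclideanSpace ℝ (Fin dδ)))
    (hΔc : IsCompact Δ) (hΔne : Δ.Nonempty)
    (φ : lp (fun _ : ↥Δ => ℝ) ∞ → ℝ)
    (hφ : ∀ x : lp (fun _ : ↥Δ => ℝ) ∞, φ x = ⨆ δ : ↥Δ, x δ)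
    (x : lp (fun _ : ↥Δ => ℝ) ∞)
    (hx : Continuous fun δ : ↥Δ => x δ) :
    HadamardDirDiffAt Set.univ
      {y : lp (fun _ : ↥Δ => ℝ) ∞ | Continuous fun δ : ↥Δ => y δ}
      φ x
      (fun h => ⨆ δ : ↥{δ₀ : ↥Δ | x δ₀ = ⨆ δ' : ↥Δ, x δ'}, h δ.1) := by
  intro h hX₀ hn tn htpos _ htto hhn _
  haveI : CompactSpace ↥Δ := isCompact_iff_compactSpace.mp hΔc
  haveI : Nonempty ↥Δ := hΔne.to_subtype
  -- pointwise bound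
  have hpt : ∀ (y : lp (fun _ : ↥Δ => ℝ) ∞) (δ : ↥Δ), |y δ| ≤ ‖y‖ := fun y δ =>
    lp.norm_apply_le_norm ENNReal.top_ne_zero y δ
  have hbdd : ∀ y : lp (fun _ : ↥Δ => ℝ) ∞, BddAbove (Set.range fun δ : ↥Δ => y δ) := by
    rintro y
    exact ⟨‖y‖, by rintro _ ⟨δ, rfl⟩; exact (le_abs_self _).trans (hpt y δ)⟩
  set M : ℝ := ⨆ δ' : ↥Δ, x δ' with hM
  set Δ₀ : Set ↥Δ := {δ₀ : ↥Δ | x δ₀ = M} with hΔ₀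
  -- maximum is attained
  obtain ⟨δm, -, hδm⟩ := isCompact_univ.exists_isMaxOn Set.univ_nonempty hx.continuousOn
  have hle : ∀ δ : ↥Δ, x δ ≤ M := fun δ => le_ciSup (hbdd x) δ
  have hδmM : x δm = M :=
    le_antisymm (hle δm) (ciSup_le fun δ => hδm (Set.mem_univ δ))
  haveI hΔ₀ne : Nonempty ↥Δ₀ := ⟨⟨δm, hδmM⟩⟩
  have hbddD : BddAbove (Set.range fun δ : ↥Δ₀ => h δ.1) :=
    ⟨‖h‖, by rintro _ ⟨δ, rfl⟩; exact (le_abs_self _).trans (hpt h δ.1)⟩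
  set D : ℝ := ⨆ δ : ↥Δ₀, h δ.1 with hD
  -- Lipschitz-type bound
  have hLip : ∀ y z : lp (fun _ : ↥Δ => ℝ) ∞, φ y ≤ φ z + ‖y - z‖ := by
    intro y z
    rw [hφ y, hφ z]
    refine ciSup_le fun δ => ?_
    have h1 : y δ - z δ ≤ ‖y - z‖ := by
      have h0 := (le_abs_self ((y - z) δ)).trans (hpt (y - z) δ)
      rw [lp.coeFn_sub, Pi.sub_apply] at h0
      exact h0
    have h2 : z δ ≤ ⨆ δ' : ↥Δ, z δ' := le_ciSup (hbdd z) δ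
    linarith
  -- key upper bound on φ (x + t • h)
  have key : ∀ ε : ℝ, 0 < ε → ∃ t₀ : ℝ, 0 < t₀ ∧ ∀ t : ℝ, 0 < t → t ≤ t₀ →
      φ (x + t • h) ≤ M + t * (D + ε) := by
    intro ε hε
    set K : Set ↥Δ := {δ : ↥Δ | D + ε ≤ h δ} with hK
    have hKclosed : IsClosed K := isClosed_le continuous_const hX₀
    -- on K, x is bounded away from M
    have hnotin : ∀ δ ∈ K, x δ < M := by
      intro δ hδ
      refine lt_of_le_of_ne (hle δ) fun hxδ => ?_
      have : h δ ≤ D := le_ciSup hbddD (⟨δ, hxδ⟩ : ↥Δ₀)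
      have : D + ε ≤ D := le_trans hδ this
      linarith
    by_cases hKne : K.Nonempty
    · obtain ⟨δK, hδK, hδKmax⟩ :=
        (hKclosed.isCompact).exists_isMaxOn hKne hx.continuousOn
      set η : ℝ := M - x δK with hη
      have hηpos : 0 < η := by have := hnotin δK hδK; linarith
      refine ⟨η / (‖h‖ + |D| + ε + 1), by positivity, fun t ht ht₀ => ?_⟩
      rw [hφ]
      refine ciSup_le fun δ => ?_
      have happ : (x + t • h) δ = x δ + t * h δ := by
        rw [lp.coeFn_add, Pi.add_apply, lp.coeFn_smul, Pi.smul_apply, smul_eq_mul]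
      rw [happ]
      by_cases hδ : δ ∈ K
      · have h1 : x δ ≤ x δK := hδKmax hδ
        have h2 : h δ ≤ ‖h‖ := (le_abs_self _).trans (hpt h δ)
        have h3 : t * (‖h‖ + |D| + ε + 1) ≤ η := by
          exact (le_div_iff₀ (by positivity)).mp ht₀
        have h4 : -|D| ≤ D := neg_abs_le D
        nlinarith
      · have : h δ < D + ε := lt_of_not_ge hδ
        have := hle δ
        nlinarith
    · refine ⟨1, one_pos, fun t ht _ => ?_⟩
      rw [hφ]
      refine ciSup_le fun δ => ?_
      have happ : (x + t • h) δ = x δ + t * h δ := by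
        rw [lp.coeFn_add, Pi.add_apply, lp.coeFn_smul, Pi.smul_apply, smul_eq_mul]
      have hδ : h δ < D + ε := lt_of_not_ge fun hc => hKne ⟨δ, hc⟩
      have := hle δ
      rw [happ]; nlinarith
  -- lower bound for the quotients
  have hlow : ∀ (t : ℝ) (g : lp (fun _ : ↥Δ => ℝ) ∞), 0 < t →
      D - ‖g - h‖ ≤ t⁻¹ * (φ (x + t • g) - φ x) := by
    intro t g ht
    have h1 : ∀ δ₀ : ↥Δ₀, h δ₀.1 ≤ t⁻¹ * (φ (x + t • g) - φ x) + ‖g - h‖ := by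
      intro δ₀
      have happ : (x + t • g) δ₀.1 = x δ₀.1 + t * g δ₀.1 := by
        rw [lp.coeFn_add, Pi.add_apply, lp.coeFn_smul, Pi.smul_apply, smul_eq_mul]
      have h2 : x δ₀.1 + t * g δ₀.1 ≤ φ (x + t • g) := by
        rw [hφ]; rw [← happ]; exact le_ciSup (hbdd _) δ₀.1
      have h3 : h δ₀.1 - g δ₀.1 ≤ ‖g - h‖ := by
        have h0 := (le_abs_self ((h - g) δ₀.1)).trans (hpt (h - g) δ₀.1)
        rw [← norm_neg (h - g), lp.coeFn_sub, Pi.sub_apply, neg_sub] at h0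
        exact h0
      have h4 : φ x = M := by rw [hφ]
      have h5 : x δ₀.1 = M := δ₀.2
      rw [h4]
      have h6 : t * g δ₀.1 ≤ φ (x + t • g) - M := by linarith
      have h7 : g δ₀.1 ≤ t⁻¹ * (φ (x + t • g) - M) := by
        rw [le_inv_mul_iff₀ ht]; linarith
      linarith
    have := ciSup_le h1
    rw [← hD] at this
    linarith
  -- final convergence
  rw [Metric.tendsto_atTop]
  intro ε hε
  obtain ⟨t₀, ht₀, hkey⟩ := key (ε / 3) (by positivity)
  have hev1 : ∀ᶠ n in atTop, ‖hn n - h‖ < ε / 3 := by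
    have := (tendsto_iff_norm_sub_tendsto_zero.mp hhn)
    exact (this.eventually (gt_mem_nhds (by positivity)))
  have hev2 : ∀ᶠ n in atTop, tn n < t₀ :=
    htto.eventually (gt_mem_nhds ht₀)
  obtain ⟨N, hN⟩ := (hev1.and hev2).exists_forall_of_atTop
  refine ⟨N, fun n hn' => ?_⟩
  obtain ⟨hN1, hN2⟩ := hN n hn'
  set t := tn n with htdef
  set g := hn n with hgdef
  have ht : 0 < t := htpos n
  have hq : (tn n)⁻¹ • (φ (x + tn n • hn n) - φ x) = t⁻¹ * (φ (x + t • g) - φ x) := rfl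
  rw [hq]
  -- lower bound
  have hlb := hlow t g ht
  -- upper bound
  have hub : t⁻¹ * (φ (x + t • g) - φ x) ≤ D + ε / 3 + ‖g - h‖ := by
    have h1 : φ (x + t • g) ≤ φ (x + t • h) + t * ‖g - h‖ := by
      have := hLip (x + t • g) (x + t • h)
      have he : x + t • g - (x + t • h) = t • (g - h) := by module
      rw [he, norm_smul, Real.norm_eq_abs, abs_of_pos ht] at this
      exact this
    have h2 : φ (x + t • h) ≤ M + t * (D + ε / 3) := hkey t ht hN2.le
    have h3 : φ x = M := by rw [hφ]
    rw [h3]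
    rw [inv_mul_le_iff₀ ht]
    nlinarith
  rw [Real.dist_eq]
  rw [abs_sub_lt_iff]
  constructor <;> nlinarith

end
end

section
/- Let Γ ⊆ ℝ^{d_γ} and Δ ⊆ ℝ^{d_δ} be compact and nonempty, let f ∈ C(Γ×Δ), and suppose Θ_0(f) = {(γ_{01},δ_{01}),…,(γ_{0K},δ_{0K})} is a finite set with K ≥ 1 points satisfying γ_{0i} ≠ γ_{0j} and δ_{0i} ≠ δ_{0j} for all i ≠ j. Then for every k, Δ_0(γ_{0k},f) = {δ_{0k}}, and for every h ∈ C(Γ×Δ), sup_{(γ_0,δ_0)∈Θ_0(f)} { sup_{δ∈Δ_0(γ_0,f)} h(γ_0,δ) − min{ h(γ_0,δ_0), inf_{γ∈Γ_0(f)} sup_{δ∈Δ_0(γ,f)} h(γ,δ) } } = max_{k=1,…,K} h(γ_{0k},δ_{0k}) − min_{k=1,…,K} h(γ_{0k},δ_{0k}). -/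
open Filter Topology

noncomputable section

variable {G D : Type*}

/-- The max-function `x̄(γ) = sup_{δ∈Δ} x(γ,δ)` (the index types `G`, `D` play the
role of the compact parameter sets `Γ` and `Δ`). -/
noncomputable def phiOf (x : G × D → ℝ) (γ : G) : ℝ := ⨆ δ : D, x (γ, δ)

/-- The optimal value `inf_{γ∈Γ} x̄(γ)`. -/
noncomputable def VOf (x : G × D → ℝ) : ℝ := ⨅ γ : G, phiOf x γ

/-- `Θ₀(x)`: the set of minimax solutions of `x`. -/
def Theta0Of (x : G × D → ℝ) : Set (G × D) :=
  {p | x p = phiOf x p.1 ∧ phiOf x p.1 = VOf x}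

/-- `Γ₀(x)`: first coordinates of minimax solutions. -/
def Gamma0Of (x : G × D → ℝ) : Set G := {γ | ∃ δ, (γ, δ) ∈ Theta0Of x}

/-- `Δ₀(γ,x)`: the set of maximizers of `x(γ,·)`. -/
def Delta0Of (x : G × D → ℝ) (γ : G) : Set D := {δ | x (γ, δ) = phiOf x γ}


/-- Γ, Δ compact nonempty, `f ∈ C(Γ×Δ)`, and `Θ₀(f)` a finite set
`{(γ₀₁,δ₀₁),…,(γ₀K,δ₀K)}` of `K ≥ 1` points with pairwise distinct `γ`'s and pairwise
distinct `δ`'s.  Then `Δ₀(γ₀ₖ,f) = {δ₀ₖ}` for every `k`, and for every continuous `h`,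
`sup_{(γ₀,δ₀)∈Θ₀(f)} { sup_{δ∈Δ₀(γ₀,f)} h(γ₀,δ) − min{ h(γ₀,δ₀),
inf_{γ∈Γ₀(f)} sup_{δ∈Δ₀(γ,f)} h(γ,δ) } } = max_k h(γ₀ₖ,δ₀ₖ) − min_k h(γ₀ₖ,δ₀ₖ)`. -/
theorem statement_14 {dγ dδ : ℕ}
    (Γ : Set (EuclideanSpace ℝ (Fin dγ))) (Δ : Set (EuclideanSpace ℝ (Fin dδ)))
    (hΓc : IsCompact Γ) (hΔc : IsCompact Δ) (hΓne : Γ.Nonempty) (hΔne : Δ.Nonempty)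
    (f : ↥Γ × ↥Δ → ℝ) (hf : Continuous f)
    (K : ℕ) (hK : 1 ≤ K) (γ₀ : Fin K → ↥Γ) (δ₀ : Fin K → ↥Δ)
    (hγinj : Function.Injective γ₀) (hδinj : Function.Injective δ₀)
    (hΘ₀ : Theta0Of f = Set.range fun k => (γ₀ k, δ₀ k)) :
    (∀ k, Delta0Of f (γ₀ k) = {δ₀ k}) ∧
      ∀ h : ↥Γ × ↥Δ → ℝ, Continuous h →
        (⨆ p : ↥(Theta0Of f),
            ((⨆ δ : ↥(Delta0Of f p.1.1), h (p.1.1, δ.1)) -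
              min (h p.1) (⨅ γ : ↥(Gamma0Of f), ⨆ δ : ↥(Delta0Of f γ.1), h (γ.1, δ.1)))) =
          (⨆ k : Fin K, h (γ₀ k, δ₀ k)) - ⨅ k : Fin K, h (γ₀ k, δ₀ k) := by

  have hK' : Nonempty (Fin K) := ⟨⟨0, hK⟩⟩
  have hmemΘ : ∀ k, (γ₀ k, δ₀ k) ∈ Theta0Of f := by
    intro k; rw [hΘ₀]; exact ⟨k, rfl⟩
  have hDelta : ∀ k, Delta0Of f (γ₀ k) = {δ₀ k} := by
    intro k
    ext δ
    simp only [Delta0Of, Set.mem_setOf_eq, Set.mem_singleton_iff]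
    constructor
    · intro hδ
      have hmem : (γ₀ k, δ) ∈ Theta0Of f := ⟨hδ, (hmemΘ k).2⟩
      rw [hΘ₀] at hmem
      obtain ⟨j, hj⟩ := hmem
      have h1 : γ₀ j = γ₀ k := congrArg Prod.fst hj
      have h2 := hγinj h1
      subst h2
      exact (congrArg Prod.snd hj).symm
    · rintro rfl
      exact (hmemΘ k).1
  have hΓ0 : Gamma0Of f = Set.range γ₀ := by
    ext γ
    constructor
    · rintro ⟨δ, hmem⟩
      rw [hΘ₀] at hmem
      obtain ⟨j, hj⟩ := hmem
      exact ⟨j, congrArg Prod.fst hj⟩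
    · rintro ⟨k, rfl⟩
      exact ⟨δ₀ k, hmemΘ k⟩
  haveI hΘfin : Finite ↥(Theta0Of f) := by
    rw [hΘ₀]; exact Set.finite_coe_iff.mpr (Set.finite_range _)
  haveI hΘne : Nonempty ↥(Theta0Of f) := ⟨⟨_, hmemΘ ⟨0, hK⟩⟩⟩
  haveI hΓ0fin : Finite ↥(Gamma0Of f) := by
    rw [hΓ0]; exact Set.finite_coe_iff.mpr (Set.finite_range _)
  haveI hΓ0ne : Nonempty ↥(Gamma0Of f) := ⟨⟨γ₀ ⟨0, hK⟩, ⟨δ₀ ⟨0, hK⟩, hmemΘ ⟨0, hK⟩⟩⟩⟩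
  refine ⟨hDelta, ?_⟩
  intro h hh
  set g : Fin K → ℝ := fun k => h (γ₀ k, δ₀ k) with hg
  have hL1 : ∀ k, (⨆ δ : ↥(Delta0Of f (γ₀ k)), h (γ₀ k, δ.1)) = g k := by
    intro k
    rw [hDelta k]
    exact ciSup_unique
  have hgbddA : BddAbove (Set.range g) := Set.Finite.bddAbove (Set.finite_range g)
  have hgbddB : BddBelow (Set.range g) := Set.Finite.bddBelow (Set.finite_range g)
  set m : ℝ := ⨅ k, g k with hm
  have hmle : ∀ k, m ≤ g k := fun k => ciInf_le hgbddB k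
  have hL2 : (⨅ γ : ↥(Gamma0Of f), ⨆ δ : ↥(Delta0Of f γ.1), h (γ.1, δ.1)) = m := by
    set F : ↥(Gamma0Of f) → ℝ := fun γ => ⨆ δ : ↥(Delta0Of f γ.1), h (γ.1, δ.1) with hF
    have hFbdd : BddBelow (Set.range F) := Set.Finite.bddBelow (Set.finite_range F)
    apply le_antisymm
    · apply le_ciInf
      intro k
      have hmem : γ₀ k ∈ Gamma0Of f := hΓ0 ▸ ⟨k, rfl⟩
      calc (⨅ γ : ↥(Gamma0Of f), F γ) ≤ F ⟨γ₀ k, hmem⟩ := ciInf_le hFbdd _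
        _ = g k := hL1 k
    · apply le_ciInf
      rintro ⟨γv, hγv⟩
      obtain ⟨k, hk⟩ : ∃ k, γ₀ k = γv := (Set.ext_iff.mp hΓ0 γv).mp hγv
      subst hk
      have hFγ : F ⟨γ₀ k, hγv⟩ = g k := hL1 k
      rw [hFγ]; exact hmle k
  rw [hL2]
  set T : ↥(Theta0Of f) → ℝ :=
    fun p => (⨆ δ : ↥(Delta0Of f p.1.1), h (p.1.1, δ.1)) - min (h p.1) m with hT
  have hTval : ∀ (k : Fin K) (hp : ((γ₀ k, δ₀ k) : ↥Γ × ↥Δ) ∈ Theta0Of f),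
      T ⟨(γ₀ k, δ₀ k), hp⟩ = g k - m := by
    intro k hp
    have : T ⟨(γ₀ k, δ₀ k), hp⟩ =
        (⨆ δ : ↥(Delta0Of f (γ₀ k)), h (γ₀ k, δ.1)) - min (g k) m := rfl
    rw [this, hL1 k, min_eq_right (hmle k)]
  have hTbdd : BddAbove (Set.range T) := Set.Finite.bddAbove (Set.finite_range T)
  apply le_antisymm
  · apply ciSup_le
    rintro ⟨pv, hpv⟩
    obtain ⟨k, hk⟩ : ∃ k, ((γ₀ k, δ₀ k) : ↥Γ × ↥Δ) = pv := (Set.ext_iff.mp hΘ₀ pv).mp hpv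
    subst hk
    rw [hTval k hpv]
    exact sub_le_sub_right (le_ciSup hgbddA k) m
  · obtain ⟨k₀, hk₀⟩ := Finite.exists_max g
    have hsup : (⨆ k, g k) = g k₀ := le_antisymm (ciSup_le hk₀) (le_ciSup hgbddA k₀)
    rw [hsup]
    calc g k₀ - m = T ⟨(γ₀ k₀, δ₀ k₀), hmemΘ k₀⟩ := (hTval k₀ (hmemΘ k₀)).symm
      _ ≤ ⨆ p, T p := le_ciSup hTbdd _

end
end

section
/- (Deterministic validity of the step-down procedure) Let Θ be a nonempty set, T: Θ → ℝ a bounded function, Θ_0 ⊆ Θ nonempty, and c: 𝒫(Θ)∖{∅} → ℝ a set function that is monotone under inclusion (S ⊆ S' implies c(S) ≤ c(S')). Define S_1 = Θ and S_{j+1} = {θ ∈ Θ : T(θ) ≤ c(S_j)} for j ≥ 1. Suppose j* ≥ 1 is an index with sup_{θ∈S_{j*}} T(θ) ≤ c(S_{j*}) (the procedure's stopping criterion). If Θ_0 ⊄ S_{j*}, then sup_{θ∈Θ_0} T(θ) > c(Θ_0). Consequently, if sup_{θ∈Θ_0} T(θ) ≤ c(Θ_0), then Θ_0 ⊆ S_{j*}.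 -/
open Filter Topology

noncomputable section

/-- deterministic validity of the step-down procedure: `Θ` is a nonempty
set, `T : Θ → ℝ` a bounded function, `Θ₀ ⊆ Θ` nonempty, and `c` a set function monotone
under inclusion (on nonempty sets).  With `S 1 = Θ` and `S (j+1) = {θ : T θ ≤ c (S j)}`
for `j ≥ 1`, if `j* ≥ 1` satisfies the stopping criterion `sup_{θ∈S j*} T θ ≤ c (S j*)`,
then: `Θ₀ ⊄ S j*` implies `sup_{θ∈Θ₀} T θ > c Θ₀`; consequently
`sup_{θ∈Θ₀} T θ ≤ c Θ₀` implies `Θ₀ ⊆ S jstar`. -/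
theorem statement_15 {Θ : Type*} [Nonempty Θ]
    (T : Θ → ℝ) (hT : ∃ M : ℝ, ∀ θ, |T θ| ≤ M)
    (Θ₀ : Set Θ) (hΘ₀ : Θ₀.Nonempty)
    (c : Set Θ → ℝ)
    (hmono : ∀ S S' : Set Θ, S.Nonempty → S ⊆ S' → c S ≤ c S')
    (S : ℕ → Set Θ) (hS1 : S 1 = Set.univ)
    (hSrec : ∀ j : ℕ, 1 ≤ j → S (j + 1) = {θ | T θ ≤ c (S j)})
    (jstar : ℕ) (hjstar : 1 ≤ jstar)
    (hstop : (⨆ θ : ↥(S jstar), T θ.1) ≤ c (S jstar)) :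
    (¬ Θ₀ ⊆ S jstar → c Θ₀ < ⨆ θ : ↥Θ₀, T θ.1) ∧
      ((⨆ θ : ↥Θ₀, T θ.1) ≤ c Θ₀ → Θ₀ ⊆ S jstar) := by
  have key : (⨆ θ : ↥Θ₀, T θ.1) ≤ c Θ₀ → ∀ j, 1 ≤ j → Θ₀ ⊆ S j := by
    intro hle j hj
    induction j with
    | zero => omega
    | succ n ih =>
      rcases Nat.eq_zero_or_pos n with rfl | hn
      · rw [hS1]; exact Set.subset_univ _
      · rw [hSrec n hn]
        intro θ hθ
        have hbdd : BddAbove (Set.range fun θ : ↥Θ₀ => T θ.1) := by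
          obtain ⟨M, hM⟩ := hT
          exact ⟨M, by rintro x ⟨y, rfl⟩; exact (abs_le.mp (hM _)).2⟩
        have hθS : T θ ≤ ⨆ θ : ↥Θ₀, T θ.1 := le_ciSup hbdd (⟨θ, hθ⟩ : ↥Θ₀)
        exact le_trans (le_trans hθS hle) (hmono Θ₀ (S n) hΘ₀ (ih hn))
  refine ⟨fun hns => ?_, fun hle => key hle jstar hjstar⟩
  by_contra h
  exact hns (key (not_lt.mp h) jstar hjstar)

end
end

section
/- Let Γ ⊆ ℝ^{d_γ} and Δ ⊆ ℝ^{d_δ} be compact and nonempty, let x, h ∈ C(Γ×Δ) with Θ_0(x) nonempty, let {t_n} ⊂ (0,∞) with t_n ↓ 0, and define the difference quotients D_n = t_n^{-1} [ inf_{γ∈Γ} sup_{δ∈Δ} (x + t_n h)(γ,δ) − inf_{γ∈Γ} sup_{δ∈Δ} x(γ,δ) ]. Then limsup_{n→∞} D_n ≤ inf_{γ∈Γ_0(x)} sup_{δ∈Δ_0(γ,x)} h(γ,δ). -/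
open Filter Topology

noncomputable section

variable {G D : Type*}

lemma aux_exists_max {X : Type*} [TopologicalSpace X] [CompactSpace X] [Nonempty X]
    (f : X → ℝ) (hf : Continuous f) :
    ∃ z, (∀ y, f y ≤ f z) ∧ (⨆ y, f y) = f z := by
  obtain ⟨z, -, hz⟩ := isCompact_univ.exists_isMaxOn Set.univ_nonempty hf.continuousOn
  refine ⟨z, fun y => hz (Set.mem_univ y), ?_⟩
  exact le_antisymm (ciSup_le fun y => hz (Set.mem_univ y))
    (le_ciSup ⟨f z, by rintro _ ⟨y, rfl⟩; exact hz (Set.mem_univ y)⟩ z)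

lemma aux_exists_min {X : Type*} [TopologicalSpace X] [CompactSpace X] [Nonempty X]
    (f : X → ℝ) (hf : Continuous f) :
    ∃ z, ∀ y, f z ≤ f y := by
  obtain ⟨z, -, hz⟩ := isCompact_univ.exists_isMinOn Set.univ_nonempty hf.continuousOn
  exact ⟨z, fun y => hz (Set.mem_univ y)⟩

/-- Γ, Δ compact nonempty, `x, h ∈ C(Γ×Δ)` with `Θ₀(x)` nonempty, `t n ↓ 0`,
and difference quotients `D n = (t n)⁻¹ [inf_γ sup_δ (x + t n h)(γ,δ) − inf_γ sup_δ x(γ,δ)]`.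
Then `limsup_n D n ≤ inf_{γ∈Γ₀(x)} sup_{δ∈Δ₀(γ,x)} h(γ,δ)`. -/
theorem statement_19 {dγ dδ : ℕ}
    (Γ : Set (EuclideanSpace ℝ (Fin dγ))) (Δ : Set (EuclideanSpace ℝ (Fin dδ)))
    (hΓc : IsCompact Γ) (hΔc : IsCompact Δ) (hΓne : Γ.Nonempty) (hΔne : Δ.Nonempty)
    (x h : ↥Γ × ↥Δ → ℝ) (hx : Continuous x) (hh : Continuous h)
    (hΘ0 : (Theta0Of x).Nonempty)
    (t : ℕ → ℝ) (ht : ∀ n, 0 < t n) (htanti : Antitone t) (htlim : Tendsto t atTop (𝓝 0)) :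
    Filter.limsup
        (fun n => (t n)⁻¹ *
          ((⨅ γ : ↥Γ, ⨆ δ : ↥Δ, (x + t n • h) (γ, δ)) - ⨅ γ : ↥Γ, ⨆ δ : ↥Δ, x (γ, δ)))
        atTop ≤
      ⨅ γ : ↥(Gamma0Of x), ⨆ δ : ↥(Delta0Of x γ.1), h (γ.1, δ.1) := by
  haveI : CompactSpace ↥Γ := isCompact_iff_compactSpace.mp hΓc
  haveI : CompactSpace ↥Δ := isCompact_iff_compactSpace.mp hΔc
  haveI : Nonempty ↥Γ := hΓne.to_subtype
  haveI : Nonempty ↥Δ := hΔne.to_subtype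
  obtain ⟨⟨γθ, δθ⟩, hθ1, hθ2⟩ := hΘ0
  haveI : Nonempty ↥(Gamma0Of x) := ⟨⟨γθ, δθ, hθ1, hθ2⟩⟩
  -- global extrema of h and x
  obtain ⟨pM, hpM, -⟩ := aux_exists_max h hh
  obtain ⟨pm, hpm⟩ := aux_exists_min h hh
  obtain ⟨qM, hqM, -⟩ := aux_exists_max x hx
  obtain ⟨qm, hqm⟩ := aux_exists_min x hx
  -- boundedness of slices of x
  have bddx : ∀ γ : ↥Γ, BddAbove (Set.range fun δ : ↥Δ => x (γ, δ)) :=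
    fun γ => ⟨x qM, by rintro _ ⟨δ, rfl⟩; exact hqM _⟩
  have bddphi : BddBelow (Set.range fun γ : ↥Γ => ⨆ δ : ↥Δ, x (γ, δ)) := by
    refine ⟨x qm, ?_⟩
    rintro _ ⟨γ, rfl⟩
    exact le_trans (hqm (γ, Classical.arbitrary _)) (le_ciSup (bddx γ) (Classical.arbitrary _))
  set V : ℝ := ⨅ γ : ↥Γ, ⨆ δ : ↥Δ, x (γ, δ) with hV
  -- reduce to a fixed γ₀ ∈ Γ₀
  refine le_ciInf ?_
  rintro ⟨γ₀, δθ', hθ1', hθ2'⟩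
  set S : ℝ := ⨆ δ : ↥(Delta0Of x γ₀), h (γ₀, δ.1) with hS
  haveI : Nonempty ↥(Delta0Of x γ₀) := ⟨⟨δθ', hθ1'⟩⟩
  have bddS : BddAbove (Set.range fun δ : ↥(Delta0Of x γ₀) => h (γ₀, δ.1)) :=
    ⟨h pM, by rintro _ ⟨δ, rfl⟩; exact hpM _⟩
  have hphiV : (⨆ δ : ↥Δ, x (γ₀, δ)) = V := hθ2'
  -- per-n data: maximizers of x + t n * h at γ₀, and global extrema of F n
  have contF : ∀ n, Continuous fun p : ↥Γ × ↥Δ => x p + t n * h p :=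
    fun n => hx.add (continuous_const.mul hh)
  have gcont : ∀ n, Continuous fun δ : ↥Δ => x (γ₀, δ) + t n * h (γ₀, δ) :=
    fun n => (contF n).comp (Continuous.prodMk_right γ₀)
  choose δsup hδ1 hδ2 using fun n => aux_exists_max _ (gcont n)
  choose pmin hpmin using fun n => aux_exists_min _ (contF n)
  choose pmax hpmax using fun n => fun (_ : True) =>
    aux_exists_max (fun p : ↥Γ × ↥Δ => x p + t n * h p) (contF n)
  have bAn : ∀ n (γ : ↥Γ), BddAbove (Set.range fun δ : ↥Δ => x (γ, δ) + t n * h (γ, δ)) := by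
    intro n γ
    obtain ⟨q, hq, -⟩ := aux_exists_max (fun p : ↥Γ × ↥Δ => x p + t n * h p) (contF n)
    exact ⟨x q + t n * h q, by rintro _ ⟨δ, rfl⟩; exact hq _⟩
  have bBn : ∀ n, BddBelow (Set.range fun γ : ↥Γ => ⨆ δ : ↥Δ, (x (γ, δ) + t n * h (γ, δ))) := by
    intro n
    refine ⟨x (pmin n) + t n * h (pmin n), ?_⟩
    rintro _ ⟨γ, rfl⟩
    exact le_trans (hpmin n (γ, Classical.arbitrary _)) (le_ciSup (bAn n γ) (Classical.arbitrary _))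
  set Vn : ℕ → ℝ := fun n => ⨅ γ : ↥Γ, ⨆ δ : ↥Δ, (x (γ, δ) + t n * h (γ, δ)) with hVn
  set Dq : ℕ → ℝ := fun n => (t n)⁻¹ * (Vn n - V) with hDq
  have hfun : (fun n => (t n)⁻¹ *
      ((⨅ γ : ↥Γ, ⨆ δ : ↥Δ, (x + t n • h) (γ, δ)) - ⨅ γ : ↥Γ, ⨆ δ : ↥Δ, x (γ, δ))) = Dq := rfl
  rw [hfun]
  -- Claim A : Dq n ≤ h (γ₀, δsup n)
  have claimA : ∀ n, Dq n ≤ h (γ₀, δsup n) := by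
    intro n
    have h1 : Vn n ≤ ⨆ δ : ↥Δ, (x (γ₀, δ) + t n * h (γ₀, δ)) := ciInf_le (bBn n) γ₀
    have h2 : (⨆ δ : ↥Δ, (x (γ₀, δ) + t n * h (γ₀, δ)))
        = x (γ₀, δsup n) + t n * h (γ₀, δsup n) := hδ2 n
    have h3 : x (γ₀, δsup n) ≤ ⨆ δ : ↥Δ, x (γ₀, δ) := le_ciSup (bddx γ₀) (δsup n)
    have h4 : Vn n - V ≤ t n * h (γ₀, δsup n) := by
      rw [← hphiV]; rw [h2] at h1; linarith
    have h5 : (t n)⁻¹ * (Vn n - V) ≤ (t n)⁻¹ * (t n * h (γ₀, δsup n)) :=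
      mul_le_mul_of_nonneg_left h4 (inv_nonneg.mpr (ht n).le)
    rwa [inv_mul_cancel_left₀ (ht n).ne'] at h5
  -- lower bound: Dq n ≥ h pm  (coboundedness)
  have claimLow : ∀ n, h pm ≤ Dq n := by
    intro n
    have key : ∀ γ : ↥Γ, V + t n * h pm ≤ ⨆ δ : ↥Δ, (x (γ, δ) + t n * h (γ, δ)) := by
      intro γ
      have hVle : V ≤ ⨆ δ : ↥Δ, x (γ, δ) := ciInf_le bddphi γ
      have : (⨆ δ : ↥Δ, x (γ, δ)) ≤ (⨆ δ : ↥Δ, (x (γ, δ) + t n * h (γ, δ))) - t n * h pm := by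
        refine ciSup_le fun δ => ?_
        have h1 : x (γ, δ) + t n * h pm ≤ x (γ, δ) + t n * h (γ, δ) := by
          have := hpm (γ, δ)
          nlinarith [(ht n).le]
        have h2 : x (γ, δ) + t n * h (γ, δ) ≤ ⨆ δ : ↥Δ, (x (γ, δ) + t n * h (γ, δ)) :=
          le_ciSup (bAn n γ) δ
        linarith
      linarith
    have hVn_ge : V + t n * h pm ≤ Vn n := le_ciInf key
    have h4 : t n * h pm ≤ Vn n - V := by linarith
    have h5 : (t n)⁻¹ * (t n * h pm) ≤ (t n)⁻¹ * (Vn n - V) :=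
      mul_le_mul_of_nonneg_left h4 (inv_nonneg.mpr (ht n).le)
    rwa [inv_mul_cancel_left₀ (ht n).ne'] at h5
  -- Claim B : for all ε > 0, eventually h(γ₀, δsup n) ≤ S + ε
  have claimB : ∀ ε : ℝ, 0 < ε → ∀ᶠ n in atTop, h (γ₀, δsup n) ≤ S + ε := by
    intro ε hε
    by_contra hcon
    rw [Filter.not_eventually] at hcon
    have hne : (atTop ⊓ 𝓟 {n | ¬ h (γ₀, δsup n) ≤ S + ε}).NeBot :=
      frequently_iff_neBot.mp hcon
    set l := atTop ⊓ 𝓟 {n | ¬ h (γ₀, δsup n) ≤ S + ε} with hl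
    set U := Ultrafilter.of l with hU
    have hUl : ↑U ≤ l := Ultrafilter.of_le l
    obtain ⟨δstar, -, hδstar⟩ := isCompact_univ.ultrafilter_le_nhds (U.map δsup)
      (le_principal_iff.mpr Filter.univ_mem)
    have htd : Tendsto δsup ↑U (𝓝 δstar) := by
      show map δsup ↑U ≤ 𝓝 δstar
      rw [← Ultrafilter.coe_map]; exact hδstar
    have hUtop : (U : Filter ℕ) ≤ atTop := hUl.trans inf_le_left
    have ht0 : Tendsto t ↑U (𝓝 (0 : ℝ)) := htlim.mono_left hUtop
    have cx : Continuous fun δ : ↥Δ => x (γ₀, δ) := hx.comp (Continuous.prodMk_right γ₀)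
    have ch : Continuous fun δ : ↥Δ => h (γ₀, δ) := hh.comp (Continuous.prodMk_right γ₀)
    have hxten : Tendsto (fun n => x (γ₀, δsup n)) ↑U (𝓝 (x (γ₀, δstar))) :=
      (cx.tendsto δstar).comp htd
    have hhten : Tendsto (fun n => h (γ₀, δsup n)) ↑U (𝓝 (h (γ₀, δstar))) :=
      (ch.tendsto δstar).comp htd
    have hmaxlim : ∀ δ : ↥Δ, x (γ₀, δ) ≤ x (γ₀, δstar) := by
      intro δ
      have h1 : Tendsto (fun n => x (γ₀, δ) + t n * h (γ₀, δ)) ↑U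
          (𝓝 (x (γ₀, δ) + 0 * h (γ₀, δ))) :=
        tendsto_const_nhds.add (ht0.mul tendsto_const_nhds)
      have h2 : Tendsto (fun n => x (γ₀, δsup n) + t n * h (γ₀, δsup n)) ↑U
          (𝓝 (x (γ₀, δstar) + 0 * h (γ₀, δstar))) :=
        hxten.add (ht0.mul hhten)
      have h3 := le_of_tendsto_of_tendsto' h1 h2 (fun n => hδ1 n δ)
      simpa using h3
    have hδstar_mem : δstar ∈ Delta0Of x γ₀ :=
      le_antisymm (le_ciSup (bddx γ₀) δstar) (ciSup_le hmaxlim)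
    have h3 : h (γ₀, δstar) ≤ S := le_ciSup bddS ⟨δstar, hδstar_mem⟩
    have hev : ∀ᶠ n in ↑U, S + ε ≤ h (γ₀, δsup n) := by
      have hmem : {n | ¬ h (γ₀, δsup n) ≤ S + ε} ∈ (U : Filter ℕ) :=
        hUl (Filter.mem_inf_of_right (Filter.mem_principal_self _))
      filter_upwards [hmem] with n hn
      exact (not_le.mp hn).le
    have h4 : S + ε ≤ h (γ₀, δstar) := ge_of_tendsto hhten hev
    linarith
  -- assemble
  have cobdd : IsCoboundedUnder (· ≤ ·) atTop Dq := by
    have hb : IsBoundedUnder (· ≥ ·) atTop Dq :=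
      Filter.isBoundedUnder_of ⟨h pm, fun n => claimLow n⟩
    exact hb.isCoboundedUnder_flip
  refine le_of_forall_pos_le_add fun ε hε => ?_
  refine Filter.limsup_le_of_le cobdd ?_
  exact (claimB ε hε).mono fun n hn => (claimA n).trans hn

end
end
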